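/- The flow-firing process on face configurations starting from any finitely supported integer configuration terminates: there is no infinite sequence of firing steps. -/

import Mathlib

def Nb (a b : ℤ × ℤ) : Prop := |a.1 - b.1| + |a.2 - b.2| = 1

def FinSupp (F : ℤ × ℤ → ℤ) : Prop := {τ | F τ ≠ 0}.Finite

/-- A firing step: neighbors `a`, `b` with `F a ≥ F b + 2`; `F a` decreases by 1 and
`F b` increases by 1. -/
def Step (F F' : ℤ × ℤ → ℤ) : Prop :=
  ∃ a b : ℤ × ℤ, Nb a b ∧ F b + 2 ≤ F a ∧
    F' = Function.update (Function.update F a (F a - 1)) b (F b + 1)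

lemma Nb.ne {a b : ℤ × ℤ} (h : Nb a b) : a ≠ b := by
  rintro rfl
  simp [Nb] at h

lemma update_sq (F : ℤ × ℤ → ℤ) (a : ℤ × ℤ) (v : ℤ) :
    (fun τ => (Function.update F a v τ)^2) = Function.update (fun τ => (F τ)^2) a (v^2) := by
  funext τ
  by_cases h : τ = a <;> simp [Function.update, h]

lemma step_dec (F F' : ℤ × ℤ → ℤ) (hF : FinSupp F) (h : Step F F') :
    FinSupp F' ∧ (∑ᶠ τ, (F' τ)^2) + 2 ≤ ∑ᶠ τ, (F τ)^2 := by
  obtain ⟨a, b, hnb, hge, hF'⟩ := h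
  have hab : a ≠ b := hnb.ne
  classical
  set s : Finset (ℤ × ℤ) := hF.toFinset ∪ {a, b} with hs
  have ha : a ∈ s := by simp [hs]
  have hb : b ∈ s := by simp [hs]
  have hsubF : Function.support (fun τ => (F τ)^2) ⊆ (s : Set (ℤ × ℤ)) := by
    intro τ hτ
    have : F τ ≠ 0 := by
      intro h
      apply hτ
      simp [h]
    simp [hs, Set.Finite.mem_toFinset, this]
    exact Or.inr (Or.inr ((Set.Finite.mem_toFinset (hs := hF)).mpr this))
  have hsubF' : Function.support (fun τ => (F' τ)^2) ⊆ (s : Set (ℤ × ℤ)) := by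
    intro τ hτ
    by_cases h1 : τ = a
    · simp [hs, h1]
    by_cases h2 : τ = b
    · simp [hs, h2]
    have hne : F τ ≠ 0 := by
      intro h
      apply hτ
      rw [hF']
      simp [Function.update, h1, h2, h]
    simp [hs, Set.Finite.mem_toFinset, hne]
    exact Or.inr (Or.inr ((Set.Finite.mem_toFinset (hs := hF)).mpr hne))
  have hF'fin : FinSupp F' := by
    apply Set.Finite.subset s.finite_toSet
    intro τ hτ
    by_cases h0 : F' τ = 0
    · exact absurd h0 hτ
    exact hsubF' (by simp only [Function.mem_support]; intro h; exact h0 (pow_eq_zero_iff (two_ne_zero) |>.mp h))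
  rw [finsum_eq_finset_sum_of_support_subset _ hsubF,
      finsum_eq_finset_sum_of_support_subset _ hsubF']
  refine ⟨hF'fin, ?_⟩
  -- compute both sums
  have hasb : a ∈ s \ {b} := by simp [ha, hab]
  have hsumF' : ∑ τ ∈ s, (F' τ)^2
      = (F b + 1)^2 + ((F a - 1)^2 + ∑ τ ∈ (s \ {b}) \ {a}, (F τ)^2) := by
    rw [hF']
    rw [show (fun τ => ((Function.update (Function.update F a (F a - 1)) b (F b + 1)) τ)^2)
        = Function.update (fun τ => ((Function.update F a (F a - 1)) τ)^2) b ((F b + 1)^2)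
        from update_sq _ _ _]
    rw [Finset.sum_update_of_mem hb]
    congr 1
    rw [show (fun τ => ((Function.update F a (F a - 1)) τ)^2)
        = Function.update (fun τ => (F τ)^2) a ((F a - 1)^2) from update_sq _ _ _]
    rw [Finset.sum_update_of_mem hasb]
  have hsumF : ∑ τ ∈ s, (F τ)^2
      = ∑ τ ∈ (s \ {b}) \ {a}, (F τ)^2 + (F a)^2 + (F b)^2 := by
    rw [Finset.sum_eq_sum_sdiff_singleton_add hb, Finset.sum_eq_sum_sdiff_singleton_add hasb]
  rw [hsumF', hsumF]
  nlinarith [hge]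

/-- The flow-firing process terminates from any finitely supported configuration. -/
theorem stmt1 (F₀ : ℤ × ℤ → ℤ) (hfin : FinSupp F₀) :
    ¬ ∃ seq : ℕ → (ℤ × ℤ → ℤ), seq 0 = F₀ ∧ ∀ n, Step (seq n) (seq (n + 1)) := by
  rintro ⟨seq, h0, hstep⟩
  have hfinall : ∀ n, FinSupp (seq n) := by
    intro n
    induction n with
    | zero => rwa [h0]
    | succ k ih => exact (step_dec _ _ ih (hstep k)).1
  set Φ : ℕ → ℤ := fun n => ∑ᶠ τ, (seq n τ)^2 with hΦ
  have hΦnonneg : ∀ n, 0 ≤ Φ n := fun n => finsum_nonneg fun τ => sq_nonneg _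
  have hdec : ∀ n, Φ (n + 1) + 2 ≤ Φ n := fun n =>
    (step_dec _ _ (hfinall n) (hstep n)).2
  have key : ∀ n, Φ n + 2 * n ≤ Φ 0 := by
    intro n
    induction n with
    | zero => simp
    | succ k ih =>
      have := hdec k
      push_cast
      push_cast at ih
      linarith
  have := key (Φ 0).toNat.succ
  have h0' := hΦnonneg (Φ 0).toNat.succ
  have : ((Φ 0).toNat : ℤ) = Φ 0 := Int.toNat_of_nonneg (hΦnonneg 0)
  push_cast at key
  have hh := key ((Φ 0).toNat + 1)
  push_cast at hh
  omega
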